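/- The centre of the algebra I_n is K: an element z ∈ I_n commutes with all elements of I_n if and only if z = λ·1 for some λ ∈ K (i.e. the centre of I_n equals the bottom subalgebra K·1). -/

import Mathlib

open MvPolynomial

/-- Multiplication by `x_i`, as a `K`-linear endomorphism of `K[x_1,…,x_n]`. -/
noncomputable def xOp (K : Type*) [Field K] (n : ℕ) (i : Fin n) :
    Module.End K (MvPolynomial (Fin n) K) :=
  LinearMap.mulLeft K (X i)

/-- The formal partial derivative `∂/∂x_i`. -/
noncomputable def dOp (K : Type*) [Field K] (n : ℕ) (i : Fin n) :
    Module.End K (MvPolynomial (Fin n) K) :=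
  (pderiv i).toLinearMap

/-- The integration operator `∫_i`, determined by `∫_i(x^α) = x^α·x_i/(α_i+1)`. -/
noncomputable def intOp (K : Type*) [Field K] (n : ℕ) (i : Fin n) :
    Module.End K (MvPolynomial (Fin n) K) :=
  (basisMonomials (Fin n) K).constr K
    (fun α => (((α i : ℕ) : K) + 1)⁻¹ • (monomial (α + Finsupp.single i 1) (1 : K)))

/-- The algebra `I_n` of polynomial integro-differential operators:
the `K`-subalgebra of `End_K(P_n)` generated by the `X_i`, `∂_i` and `∫_i`. -/
noncomputable def IDO (K : Type*) [Field K] (n : ℕ) :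
    Subalgebra K (Module.End K (MvPolynomial (Fin n) K)) :=
  Algebra.adjoin K (Set.range (xOp K n) ∪ Set.range (dOp K n) ∪ Set.range (intOp K n))

/-- `X_i` as an element of `I_n`. -/
noncomputable def xElt (K : Type*) [Field K] (n : ℕ) (i : Fin n) : IDO K n :=
  ⟨xOp K n i, Algebra.subset_adjoin (Or.inl (Or.inl ⟨i, rfl⟩))⟩

/-- `∂_i` as an element of `I_n`. -/
noncomputable def dElt (K : Type*) [Field K] (n : ℕ) (i : Fin n) : IDO K n :=
  ⟨dOp K n i, Algebra.subset_adjoin (Or.inl (Or.inr ⟨i, rfl⟩))⟩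

/-- `∫_i` as an element of `I_n`. -/
noncomputable def intElt (K : Type*) [Field K] (n : ℕ) (i : Fin n) : IDO K n :=
  ⟨intOp K n i, Algebra.subset_adjoin (Or.inr ⟨i, rfl⟩)⟩

-- auxiliary lemmas

theorem coeff_pderiv' {σ R : Type*} [CommRing R] [DecidableEq σ] (i : σ) (m : σ →₀ ℕ)
    (q : MvPolynomial σ R) :
    coeff m (pderiv i q) = (m i + 1 : ℕ) * coeff (m + Finsupp.single i 1) q := by
  induction q using MvPolynomial.induction_on' with
  | monomial s a =>
    rw [pderiv_monomial, coeff_monomial, coeff_monomial]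
    split_ifs with h1 h2 h2
    · subst h2
      simp [mul_comm]
    · have hs : s i = 0 := by
        by_contra hs
        apply h2
        ext j
        by_cases hj : j = i
        · subst hj
          subst h1
          simp only [Finsupp.add_apply, Finsupp.tsub_apply, Finsupp.single_eq_same]
          omega
        · subst h1
          simp [Finsupp.single_apply, hj, Ne.symm hj]
      simp [hs]
    · exfalso; apply h1; subst h2; ext j; by_cases hj : j = i
      · subst hj; simp [Finsupp.single_eq_same]
      · simp [Finsupp.single_apply, hj, Ne.symm hj]
    · simp
  | add p q hp hq => simp [map_add, coeff_add, hp, hq, mul_add]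

theorem eq_C_of_pderiv_eq_zero {σ K : Type*} [Field K] [CharZero K] [DecidableEq σ]
    {q : MvPolynomial σ K} (h : ∀ i, pderiv i q = 0) : q = C (coeff 0 q) := by
  ext m
  rw [coeff_C]
  split_ifs with hm
  · rw [← hm]
  · obtain ⟨i, hi⟩ : ∃ i, m i ≠ 0 := by
      by_contra h'
      push_neg at h'
      exact hm (Finsupp.ext fun i => (h' i).symm)
    have key := coeff_pderiv' i (m - Finsupp.single i 1) q
    rw [h i] at key
    have hms : m - Finsupp.single i 1 + Finsupp.single i 1 = m := by
      ext j
      by_cases hj : j = i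
      · subst hj
        simp only [Finsupp.add_apply, Finsupp.tsub_apply, Finsupp.single_eq_same]
        omega
      · simp [Finsupp.single_apply, Ne.symm hj]
    rw [hms, coeff_zero] at key
    rcases mul_eq_zero.mp key.symm with h' | h'
    · exact absurd h' (Nat.cast_ne_zero.mpr (Nat.succ_ne_zero _))
    · exact h'

theorem statement7' (K : Type*) [Field K] [CharZero K] (n : ℕ)
    (z : Module.End K (MvPolynomial (Fin n) K))
    (hx : ∀ i, z * LinearMap.mulLeft K (X i) = LinearMap.mulLeft K (X i) * z)
    (hd : ∀ i : Fin n, z * (pderiv i).toLinearMap = (pderiv i).toLinearMap * z) :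
    ∃ lam : K, z = algebraMap K (Module.End K (MvPolynomial (Fin n) K)) lam := by
  -- z is multiplication by q := z 1
  have hmul : ∀ p : MvPolynomial (Fin n) K, z p = p * z 1 := by
    intro p
    induction p using MvPolynomial.induction_on with
    | C a =>
      have : (C a : MvPolynomial (Fin n) K) = a • 1 := by
        rw [smul_eq_C_mul, mul_one]
      rw [this, map_smul, smul_eq_C_mul, smul_eq_C_mul, mul_one]
    | add p q hp hq => rw [map_add, hp, hq, add_mul]
    | mul_X p i hp =>
      have hcomm := congrArg (fun g : Module.End K (MvPolynomial (Fin n) K) => g p) (hx i)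
      simp only [Module.End.mul_apply, LinearMap.mulLeft_apply] at hcomm
      calc z (p * X i) = z (X i * p) := by rw [mul_comm]
        _ = X i * z p := hcomm
        _ = X i * (p * z 1) := by rw [hp]
        _ = p * X i * z 1 := by ring
  -- pderiv i (z 1) = 0
  have hdz : ∀ i, pderiv i (z 1) = 0 := by
    intro i
    have hcomm : z (pderiv i (X i)) = pderiv i (z (X i)) :=
      congrArg (fun g : Module.End K (MvPolynomial (Fin n) K) => g (X i)) (hd i)
    rw [pderiv_X_self, hmul (X i), pderiv_mul, pderiv_X_self, one_mul] at hcomm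
    have hX : X i * pderiv i (z 1) = 0 := left_eq_add.mp hcomm
    exact (mul_eq_zero.mp hX).resolve_left (X_ne_zero i)
  refine ⟨coeff 0 (z 1), LinearMap.ext fun p => ?_⟩
  conv_lhs => rw [hmul p, eq_C_of_pderiv_eq_zero hdz]
  rw [Module.algebraMap_end_apply, smul_eq_C_mul, mul_comm]

/-- The centre of the algebra `I_n` is `K`: an element of `I_n` commutes with all elements
of `I_n` if and only if it is a scalar `λ·1` with `λ ∈ K`. -/
theorem statement7 (K : Type*) [Field K] [CharZero K] (n : ℕ) :
    ∀ z : IDO K n, (∀ w : IDO K n, z * w = w * z) ↔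
      ∃ lam : K, z = algebraMap K (IDO K n) lam := by
  intro z
  constructor
  · intro hz
    have hx : ∀ i, z.val * LinearMap.mulLeft K (X i) = LinearMap.mulLeft K (X i) * z.val :=
      fun i => congrArg Subtype.val (hz (xElt K n i))
    have hd : ∀ i : Fin n, z.val * (pderiv i).toLinearMap = (pderiv i).toLinearMap * z.val :=
      fun i => congrArg Subtype.val (hz (dElt K n i))
    obtain ⟨lam, hlam⟩ := statement7' K n z.val hx hd
    exact ⟨lam, Subtype.ext hlam⟩
  · rintro ⟨lam, rfl⟩ w
    exact Algebra.commutes lam w
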